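/- arXiv:1605.03069 — 2 statements merged into one kernel-verified Lean document; each statement's English description precedes it below -/
import Mathlib

section
/- Let 0 < a < 1, 0 < b < 1 with a·b/(1-b) ≤ 1 and a > 1 - b. Then the minimal nonnegative fixed point of H(x) = 1 - a + a·x·exp(b(1-b)^{-1}(x-1)) on [0,1] is strictly greater than 1 - a. -/
/-- For `0 < a < 1`, `0 < b < 1` with `a·b/(1-b) ≤ 1` and `a > 1 - b`, the minimal
nonnegative fixed point of `H(x) = 1 - a + a·x·exp(b(1-b)⁻¹(x-1))` on `[0,1]` is `> 1 - a`. -/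
theorem stmt_3 (a b : ℝ) (ha0 : 0 < a) (ha1 : a < 1) (hb0 : 0 < b) (hb1 : b < 1)
    (hmean : a * b / (1 - b) ≤ 1) (hab : a > 1 - b)
    (q : ℝ)
    (hq : IsLeast {x : ℝ | x ∈ Set.Icc (0 : ℝ) 1 ∧
      1 - a + a * x * Real.exp (b * (1 - b)⁻¹ * (x - 1)) = x} q) :
    q > 1 - a := by
  obtain ⟨⟨⟨hq0, hq1⟩, heq⟩, -⟩ := hq
  have hE : 0 < Real.exp (b * (1 - b)⁻¹ * (q - 1)) := Real.exp_pos _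
  rcases eq_or_lt_of_le hq0 with h0 | h0
  · rw [← h0] at heq; simp at heq; linarith
  · nlinarith [mul_pos (mul_pos ha0 h0) hE]
end

section
/- Let 0 < p, 0 < ε < 1 with 3pε² < 1, and define the sequence m_k = 3p·ε^{2^{k-1}} for k ≥ 2, with the recursion m_k = ε^{2^{k-1}} · (∑_{j≥0} m_{k-1}^j) · 3p(1 - 3p·ε^{2^{k-2}}) for k ≥ 3 and m_2 = 3p·ε². Then m_k = 3p·ε^{2^{k-1}} for all k ≥ 2, and in particular m_k < 1 for all k ≥ 2. -/
/-- For `0 < p`, `0 < ε < 1` with `3pε² < 1`: if `m 2 = 3p·ε²` and for `k ≥ 3`,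
`m k = ε^{2^{k-1}} · (∑_{j≥0} (m (k-1))^j) · 3p(1 - 3p·ε^{2^{k-2}})`, then
`m k = 3p·ε^{2^{k-1}}` for all `k ≥ 2`, and in particular `m k < 1` for all `k ≥ 2`. -/
theorem stmt_7 (p ε : ℝ) (hp : 0 < p) (hε0 : 0 < ε) (hε1 : ε < 1)
    (hpε : 3 * p * ε ^ 2 < 1) (m : ℕ → ℝ)
    (hm2 : m 2 = 3 * p * ε ^ 2)
    (hrec : ∀ k : ℕ, 3 ≤ k →
      m k = ε ^ (2 ^ (k - 1)) * (∑' j : ℕ, (m (k - 1)) ^ j)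
        * (3 * p * (1 - 3 * p * ε ^ (2 ^ (k - 2))))) :
    ∀ k : ℕ, 2 ≤ k → m k = 3 * p * ε ^ (2 ^ (k - 1)) ∧ m k < 1 := by
  have hlt : ∀ k : ℕ, 2 ≤ k → 3 * p * ε ^ (2 ^ (k - 1)) < 1 := by
    intro k hk
    have h2 : 2 ≤ 2 ^ (k - 1) := by
      calc 2 = 2 ^ 1 := by norm_num
      _ ≤ 2 ^ (k - 1) := Nat.pow_le_pow_right (by norm_num) (by omega)
    have : ε ^ (2 ^ (k - 1)) ≤ ε ^ 2 :=
      pow_le_pow_of_le_one hε0.le hε1.le h2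
    calc 3 * p * ε ^ (2 ^ (k - 1)) ≤ 3 * p * ε ^ 2 := by
          apply mul_le_mul_of_nonneg_left this (by positivity)
      _ < 1 := hpε
  intro k hk
  induction k, hk using Nat.le_induction with
  | base => exact ⟨hm2, hm2 ▸ hlt 2 le_rfl⟩
  | succ n hn ih =>
    obtain ⟨heq, hlt1⟩ := ih
    have hpos : 0 < m n := heq ▸ by positivity
    have hrecn := hrec (n + 1) (by omega)
    have hn1 : n + 1 - 1 = n := by omega
    have hn2 : n + 1 - 2 = n - 1 := by omega
    rw [hn1, hn2] at hrecn
    have htsum : (∑' j : ℕ, (m n) ^ j) = (1 - m n)⁻¹ :=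
      tsum_geometric_of_lt_one hpos.le hlt1
    have hne : (1 - m n) ≠ 0 := by nlinarith
    have key : m (n + 1) = 3 * p * ε ^ (2 ^ n) := by
      rw [heq] at hne
      rw [hrecn, htsum, heq]
      field_simp
    exact ⟨key, key ▸ hlt (n + 1) (by omega)⟩
end
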